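/- The function Ψ tends to +∞ as ρ → +∞; that is, for every K > 0 there exists R > 0 such that Ψ(ρ) > K for all ρ > R. -/

import Mathlib

open MeasureTheory intervalIntegral Set

/-- The relative pressure potential `G(ρ) = ρ ∫_{ρ̄}^{ρ} s⁻²(p(s) - p̄) ds`
    with `p(s) = a s^γ`. -/
noncomputable def Gfun (a γ ρb ρ : ℝ) : ℝ :=
  ρ * ∫ s in ρb..ρ, (a * s ^ γ - a * ρb ^ γ) / s ^ 2

/-- Kanel''s function `Ψ(ρ) = ∫_{ρ̄}^{ρ} √(G(s)) / s^{3/2} ds`. -/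
noncomputable def PsiFun (a γ ρb ρ : ℝ) : ℝ :=
  ∫ s in ρb..ρ, Real.sqrt (Gfun a γ ρb s) / s ^ ((3 : ℝ) / 2)

lemma fcont {a γ ρb : ℝ} (hρb : 0 < ρb) : ContinuousOn (fun t : ℝ => (a * t ^ γ - a * ρb ^ γ) / t ^ 2) (Ici ρb) := by
  intro t ht
  have ht0 : t ≠ 0 := by have := ht; simp only [mem_Ici] at this; linarith [hρb]
  apply ContinuousWithinAt.div
  · exact (((Real.continuousAt_rpow_const t γ (Or.inl ht0)).const_smul a).sub
      continuousAt_const).continuousWithinAt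
  · exact (continuous_pow 2).continuousWithinAt
  · positivity

lemma fnonneg {a γ ρb : ℝ} (ha : 0 < a) (hγ : 1 ≤ γ) (hρb : 0 < ρb) {t : ℝ} (ht : ρb ≤ t) :
    0 ≤ (a * t ^ γ - a * ρb ^ γ) / t ^ 2 := by
  apply div_nonneg _ (by positivity)
  have : ρb ^ γ ≤ t ^ γ := Real.rpow_le_rpow hρb.le ht (by linarith)
  have ha' := ha.le
  nlinarith

theorem PsiFun_tendsto_atTop (a γ ρb : ℝ) (ha : 0 < a) (hγ : 1 ≤ γ) (hρb : 0 < ρb) :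
    ∀ K : ℝ, 0 < K → ∃ R : ℝ, 0 < R ∧ ∀ ρ : ℝ, R < ρ → K < PsiFun a γ ρb ρ := by
  intro K hK
  set f : ℝ → ℝ := fun t => (a * t ^ γ - a * ρb ^ γ) / t ^ 2 with hf
  have hfc : ContinuousOn f (Ici ρb) := fcont hρb
  have hfint : ∀ x y : ℝ, ρb ≤ x → ρb ≤ y → IntervalIntegrable f volume x y := by
    intro x y hx hy
    exact (hfc.mono (fun t ht => by
      rcases mem_uIcc.1 ht with h | h
      · exact le_trans hx h.1
      · exact le_trans hy h.1)).intervalIntegrable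
  set c : ℝ := ∫ t in ρb..(2*ρb), f t with hc
  have hcpos : 0 < c := by
    apply intervalIntegral_pos_of_pos_on (hfint _ _ le_rfl (by linarith))
    · intro x hx
      have hx1 : ρb < x := hx.1
      have hx0 : (0:ℝ) < x := lt_trans hρb hx1
      apply div_pos _ (by positivity)
      have : ρb ^ γ < x ^ γ := Real.rpow_lt_rpow hρb.le hx1 (by linarith)
      nlinarith
    · linarith
  -- G lower bound
  have hG : ∀ s : ℝ, 2*ρb ≤ s → c * s ≤ Gfun a γ ρb s := by
    intro s hs
    have hsplit : (∫ t in ρb..s, f t) = c + ∫ t in 2*ρb..s, f t := by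
      rw [hc, integral_add_adjacent_intervals (hfint _ _ le_rfl (by linarith))
        (hfint _ _ (by linarith) (by linarith))]
    have h2 : 0 ≤ ∫ t in 2*ρb..s, f t :=
      intervalIntegral.integral_nonneg hs (fun u hu => fnonneg ha hγ hρb (by linarith [hu.1]))
    have : c ≤ ∫ t in ρb..s, f t := by rw [hsplit]; linarith
    have hspos : (0:ℝ) < s := by linarith
    calc c * s ≤ (∫ t in ρb..s, f t) * s := by nlinarith
      _ = Gfun a γ ρb s := by rw [Gfun]; ring
  set ψ : ℝ → ℝ := fun s => Real.sqrt (Gfun a γ ρb s) / s ^ ((3 : ℝ) / 2) with hψ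
  -- continuity of G and ψ on compact intervals
  have hψcont : ∀ M : ℝ, ContinuousOn ψ (Icc ρb M) := by
    intro M
    rcases le_or_gt ρb M with h | h
    · have hF : ContinuousOn (fun x => ∫ t in ρb..x, f t) (Icc ρb M) := by
        have := continuousOn_primitive_interval
          (f := f) (μ := volume) (a := ρb) (b := M)
          ((hfc.mono (by rw [uIcc_of_le h]; exact Icc_subset_Ici_self)).integrableOn_compact
            (by rw [uIcc_of_le h]; exact isCompact_Icc))
        rwa [uIcc_of_le h] at this
      have hGc : ContinuousOn (Gfun a γ ρb) (Icc ρb M) := continuousOn_id.mul hF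
      apply ContinuousOn.div (hGc.sqrt)
      · intro x hx
        exact (Real.continuousAt_rpow_const x _ (Or.inl (by have h0 := hx.1; nlinarith))).continuousWithinAt
      · intro x hx
        have hx0 : (0:ℝ) < x := lt_of_lt_of_le hρb hx.1
        positivity
    · rw [Icc_eq_empty (not_le.2 h)]; exact continuousOn_empty _
  have hψint : ∀ x y : ℝ, ρb ≤ x → ρb ≤ y → IntervalIntegrable ψ volume x y := by
    intro x y hx hy
    apply ((hψcont (max x y)).mono _).intervalIntegrable
    intro t ht
    rcases mem_uIcc.1 ht with h | h
    · exact ⟨le_trans hx h.1, le_trans h.2 (le_max_right x y)⟩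
    · exact ⟨le_trans hy h.1, le_trans h.2 (le_max_left x y)⟩
  have hsc : 0 < Real.sqrt c := Real.sqrt_pos.2 hcpos
  refine ⟨2*ρb * Real.exp (K / Real.sqrt c), by positivity, ?_⟩
  intro ρ hρ
  have hexp : (1:ℝ) ≤ Real.exp (K / Real.sqrt c) :=
    Real.one_le_exp (by positivity)
  have hρ2 : 2*ρb < ρ := by nlinarith
  -- pointwise bound on [2ρb, ρ]
  have hbound : ∀ s ∈ Icc (2*ρb) ρ, Real.sqrt c * (1/s) ≤ ψ s := by
    intro s hs
    have hs0 : (0:ℝ) < s := by have := hs.1; linarith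
    have hss : (0:ℝ) < Real.sqrt s := Real.sqrt_pos.2 hs0
    have hs32 : s ^ ((3:ℝ)/2) = s * Real.sqrt s := by
      rw [show (3:ℝ)/2 = 1 + 1/2 by norm_num, Real.rpow_add hs0, Real.rpow_one,
        Real.sqrt_eq_rpow]
    have h1 : Real.sqrt c * Real.sqrt s ≤ Real.sqrt (Gfun a γ ρb s) := by
      rw [← Real.sqrt_mul hcpos.le]
      exact Real.sqrt_le_sqrt (hG s hs.1)
    calc Real.sqrt c * (1/s) = (Real.sqrt c * Real.sqrt s) / (s * Real.sqrt s) := by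
          field_simp
      _ ≤ Real.sqrt (Gfun a γ ρb s) / (s * Real.sqrt s) := by
          apply div_le_div_of_nonneg_right h1 ?_ |>.trans_eq rfl
          positivity
      _ = ψ s := by rw [hψ]; simp only; rw [hs32]
  -- integrability of the comparison function
  have hcmp : IntervalIntegrable (fun s => Real.sqrt c * (1/s)) volume (2*ρb) ρ := by
    apply ContinuousOn.intervalIntegrable
    apply ContinuousOn.mul continuousOn_const
    apply ContinuousOn.div continuousOn_const continuousOn_id
    intro x hx
    rw [uIcc_of_le hρ2.le] at hx
    have : (0:ℝ) < x := by have := hx.1; linarith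
    exact ne_of_gt this
  have hsplit : PsiFun a γ ρb ρ = (∫ s in ρb..(2*ρb), ψ s) + ∫ s in (2*ρb)..ρ, ψ s := by
    rw [PsiFun, ← integral_add_adjacent_intervals (hψint ρb (2*ρb) le_rfl (by linarith))
      (hψint (2*ρb) ρ (by linarith) (by linarith))]
  have h01 : 0 ≤ ∫ s in ρb..(2*ρb), ψ s := by
    apply intervalIntegral.integral_nonneg (by linarith)
    intro u hu
    have hu0 : (0:ℝ) < u := lt_of_lt_of_le hρb hu.1
    rw [hψ]; positivity
  have h02 : (∫ s in (2*ρb)..ρ, Real.sqrt c * (1/s)) ≤ ∫ s in (2*ρb)..ρ, ψ s :=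
    intervalIntegral.integral_mono_on hρ2.le hcmp (hψint _ _ (by linarith) (by linarith)) hbound
  have hval : (∫ s in (2*ρb)..ρ, Real.sqrt c * (1/s))
      = Real.sqrt c * Real.log (ρ / (2*ρb)) := by
    rw [intervalIntegral.integral_const_mul, integral_one_div_of_pos (by linarith) (by linarith)]
  have hlog : K / Real.sqrt c < Real.log (ρ / (2*ρb)) := by
    have h1 : Real.log (2*ρb * Real.exp (K / Real.sqrt c)) < Real.log ρ :=
      Real.log_lt_log (by positivity) hρ
    rw [Real.log_mul (by positivity) (Real.exp_ne_zero _), Real.log_exp] at h1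
    rw [Real.log_div (by linarith) (by positivity)]
    linarith
  have hKlt : K < Real.sqrt c * Real.log (ρ / (2*ρb)) := by
    have := (div_lt_iff₀ hsc).1 hlog
    linarith [mul_comm (Real.log (ρ / (2*ρb))) (Real.sqrt c)]
  rw [hsplit]
  linarith [h02, hval ▸ h02]
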